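/- Let M be a 3-connected matroid, and let (P_1, …, P_m) be a partition of E(M) with m ≥ 2 such that |P_1| ≥ 2 and, for all i ∈ {2, …, m} and j ∈ [m] − {i}, the set P_i is a triad and r(P_i ∪ P_j) = r(P_j) + 1. Then (P_1, …, P_m) is a paddle of M: every union of petals Y = ∪_{i∈J} P_i for ∅ ≠ J ⊊ [m] satisfies λ(Y) = 2, and ∏(P_i, P_j) = 2 for all distinct i, j. -/

import Mathlib

open Matroid Set

namespace DetPairs

variable {α : Type*}

/-- The rank of a set in a matroid: the maximum size of an independent subset
(as an integer, for convenient arithmetic). -/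
noncomputable def r (M : Matroid α) (X : Set α) : ℤ :=
  ((sSup (Set.ncard '' {I | M.Indep I ∧ I ⊆ X}) : ℕ) : ℤ)

/-- The connectivity function `λ_M(X) = r(X) + r(E − X) − r(M)`. -/
noncomputable def lam (M : Matroid α) (X : Set α) : ℤ :=
  r M X + r M (M.E \ X) - r M M.E

/-- Local connectivity `⊓(X,Y) = r(X) + r(Y) − r(X ∪ Y)`. -/
noncomputable def localConn (M : Matroid α) (X Y : Set α) : ℤ :=
  r M X + r M Y - r M (X ∪ Y)

/-- A circuit: a minimal dependent set. -/
def Circuit (M : Matroid α) (C : Set α) : Prop :=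
  C ⊆ M.E ∧ ¬ M.Indep C ∧ ∀ D, D ⊂ C → M.Indep D

/-- A cocircuit: a circuit of the dual. -/
def Cocircuit (M : Matroid α) (C : Set α) : Prop := Circuit M✶ C

/-- A triangle: a 3-element circuit. -/
def Triangle (M : Matroid α) (T : Set α) : Prop := Circuit M T ∧ T.ncard = 3

/-- A triad: a 3-element cocircuit. -/
def Triad (M : Matroid α) (T : Set α) : Prop := Cocircuit M T ∧ T.ncard = 3

/-- A quad: a 4-element set that is both a circuit and a cocircuit. -/
def Quad (M : Matroid α) (Q : Set α) : Prop :=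
  Circuit M Q ∧ Cocircuit M Q ∧ Q.ncard = 4

/-- Deletion of a set of elements. -/
def Del (M : Matroid α) (D : Set α) : Matroid α := M ↾ (M.E \ D)

/-- Contraction of a set of elements. -/
def Con (M : Matroid α) (C : Set α) : Matroid α := (M✶ ↾ (M.E \ C))✶

/-- `M` is 3-connected: it has no `k`-separation for `k = 1, 2`, where a
`k`-separation is a set `X` with `λ(X) = k − 1`, `|X| ≥ k` and `|E − X| ≥ k`. -/
def ThreeConnected (M : Matroid α) : Prop :=
  ∀ k : ℕ, 0 < k → k < 3 → ∀ X ⊆ M.E,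
    ¬ (lam M X = (k : ℤ) - 1 ∧ (k : ℤ) ≤ X.ncard ∧ (k : ℤ) ≤ (M.E \ X).ncard)

/-- A detachable pair: distinct elements `e, f` such that `M \ e \ f` or
`M / e / f` is 3-connected. -/
def DetachablePair (M : Matroid α) (e f : α) : Prop :=
  e ≠ f ∧ e ∈ M.E ∧ f ∈ M.E ∧
    (ThreeConnected (Del M {e, f}) ∨ ThreeConnected (Con M {e, f}))

/-- The triple of elements with indices `i, i+1, i+2` in an ordering. -/
def tri (e : ℕ → α) (i : ℕ) : Set α := {e i, e (i + 1), e (i + 2)}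

/-- `(e 0, …, e (n-1))` is a fan ordering of length `n ≥ 3` in `M`:
consecutive triples alternate between triangles and triads. -/
def FanOrd (M : Matroid α) (n : ℕ) (e : ℕ → α) : Prop :=
  3 ≤ n ∧ Set.InjOn e (Set.Iio n) ∧ (∀ i < n, e i ∈ M.E) ∧
    (Triangle M (tri e 0) ∨ Triad M (tri e 0)) ∧
    ∀ i, i + 3 < n →
      (Triangle M (tri e i) → Triad M (tri e (i + 1))) ∧
      (Triad M (tri e i) → Triangle M (tri e (i + 1)))

/-- A fan (as a set): either a 2-element subset of the ground set, or the
underlying set of a fan ordering of length at least 3. -/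
def IsFan (M : Matroid α) (F : Set α) : Prop :=
  (F ⊆ M.E ∧ F.ncard = 2) ∨ ∃ n e, FanOrd M n e ∧ F = e '' Set.Iio n

/-- A maximal fan: a fan contained in no strictly larger fan. -/
def MaximalFan (M : Matroid α) (F : Set α) : Prop :=
  IsFan M F ∧ ∀ F', IsFan M F' → F ⊆ F' → F' = F

/-- `M` is a wheel or a whirl: its ground set has a cyclic ordering of even size
`2n` in which consecutive triples alternate between triangles and triads. -/
def IsWheelOrWhirl (M : Matroid α) : Prop :=
  ∃ (n : ℕ) (e : ℕ → α), 2 ≤ n ∧ Set.InjOn e (Set.Iio (2 * n)) ∧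
    M.E = e '' Set.Iio (2 * n) ∧
    ∀ i < 2 * n,
      (i % 2 = 0 → Triangle M {e i, e ((i + 1) % (2 * n)), e ((i + 2) % (2 * n))}) ∧
      (i % 2 = 1 → Triad M {e i, e ((i + 1) % (2 * n)), e ((i + 2) % (2 * n))})

/-- An `M(K₄)`-separator: a 6-element set `{a,b,c,x,y,z}` where `{x,y,z}` is a
triad and `{a,b,c}`, `{a,x,y}`, `{b,x,z}`, `{c,y,z}` are triangles. -/
def MK4Sep (M : Matroid α) (S : Set α) : Prop :=
  ∃ a b c x y z : α, S = {a, b, c, x, y, z} ∧ S.ncard = 6 ∧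
    Triad M {x, y, z} ∧ Triangle M {a, b, c} ∧ Triangle M {a, x, y} ∧
    Triangle M {b, x, z} ∧ Triangle M {c, y, z}

/-- A vertical 3-separation `(X, {e}, Y)` of `M`. -/
def VertThreeSep (M : Matroid α) (X : Set α) (e : α) (Y : Set α) : Prop :=
  X ∪ {e} ∪ Y = M.E ∧ Disjoint X Y ∧ e ∉ X ∧ e ∉ Y ∧
    lam M X = 2 ∧ lam M Y = 2 ∧ e ∈ M.closure X ∧ e ∈ M.closure Y ∧
    3 ≤ r M X ∧ 3 ≤ r M Y

/-- `N` is a simplification of `M`: a restriction of `M` to a set of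
representatives, one from each parallel class of nonloops. -/
def SimplificationOf (M N : Matroid α) : Prop :=
  ∃ X : Set α, (∀ x ∈ X, x ∈ M.E ∧ x ∉ M.closure ∅) ∧ N = M ↾ X ∧
    ∀ y ∈ M.E, y ∉ M.closure ∅ →
      ∃! x, x ∈ X ∧ M.closure {y} = M.closure {x}

section RankLemmas

variable {M : Matroid α} {I J X Y B D : Set α}

lemma ncard_le_of_basis' [M.Finite] (hI : M.IsBasis' I X) (hJ : M.Indep J) (hJX : J ⊆ X) :
    J.ncard ≤ I.ncard := by
  obtain ⟨J', hJ', hJJ'⟩ := hJ.subset_isBasis'_of_subset hJX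
  have h1 : (M ↾ X).IsBase I := isBase_restrict_iff'.2 hI
  have h2 : (M ↾ X).IsBase J' := isBase_restrict_iff'.2 hJ'
  calc J.ncard ≤ J'.ncard := ncard_le_ncard hJJ' (M.set_finite J' hJ'.indep.subset_ground)
    _ = I.ncard := h2.ncard_eq_ncard_of_isBase h1

lemma r_eq_of_basis' [M.Finite] (hI : M.IsBasis' I X) : r M X = I.ncard := by
  have hub : ∀ n ∈ Set.ncard '' {J | M.Indep J ∧ J ⊆ X}, n ≤ I.ncard := by
    rintro n ⟨J, ⟨hJ, hJX⟩, rfl⟩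
    exact ncard_le_of_basis' hI hJ hJX
  have hmem : I.ncard ∈ Set.ncard '' {J | M.Indep J ∧ J ⊆ X} :=
    ⟨I, ⟨hI.indep, hI.subset⟩, rfl⟩
  have h : sSup (Set.ncard '' {J | M.Indep J ∧ J ⊆ X}) = I.ncard :=
    le_antisymm (csSup_le ⟨_, hmem⟩ hub) (le_csSup ⟨_, hub⟩ hmem)
  simp [r, h]

lemma ncard_le_r [M.Finite] (hJ : M.Indep J) (hJX : J ⊆ X) : (J.ncard : ℤ) ≤ r M X := by
  obtain ⟨I, hI⟩ := M.exists_isBasis' X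
  rw [r_eq_of_basis' hI]
  exact_mod_cast ncard_le_of_basis' hI hJ hJX

lemma r_mono [M.Finite] (h : X ⊆ Y) : r M X ≤ r M Y := by
  obtain ⟨I, hI⟩ := M.exists_isBasis' X
  rw [r_eq_of_basis' hI]
  exact ncard_le_r hI.indep (hI.subset.trans h)

lemma r_le_ncard [M.Finite] (hX : X.Finite) : r M X ≤ X.ncard := by
  obtain ⟨I, hI⟩ := M.exists_isBasis' X
  rw [r_eq_of_basis' hI]
  exact_mod_cast ncard_le_ncard hI.subset hX

lemma r_nonneg (M : Matroid α) (X : Set α) : 0 ≤ r M X := Int.natCast_nonneg _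

lemma r_submod [M.Finite] (hX : X ⊆ M.E) (hY : Y ⊆ M.E) :
    r M (X ∪ Y) + r M (X ∩ Y) ≤ r M X + r M Y := by
  obtain ⟨I, hI⟩ := M.exists_isBasis (X ∩ Y) (inter_subset_left.trans hX)
  obtain ⟨J, hJ, hJI⟩ := hI.exists_isBasis_inter_eq_of_superset
    (inter_subset_left.trans subset_union_left) (union_subset hX hY)
  have hJfin : J.Finite := M.set_finite J hJ.indep.subset_ground
  have h1 : ((J ∩ X).ncard : ℤ) ≤ r M X := ncard_le_r (hJ.indep.inter_right X) inter_subset_right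
  have h2 : ((J ∩ Y).ncard : ℤ) ≤ r M Y := ncard_le_r (hJ.indep.inter_right Y) inter_subset_right
  have hu : (J ∩ X) ∪ (J ∩ Y) = J := by
    rw [← inter_union_distrib_left]; exact inter_eq_left.2 hJ.subset
  have hi : (J ∩ X) ∩ (J ∩ Y) = I := by
    rw [← hJI]; ext x; constructor
    · rintro ⟨⟨h1, h2⟩, ⟨h3, h4⟩⟩; exact ⟨h1, h2, h4⟩
    · rintro ⟨h1, h2, h3⟩; exact ⟨⟨h1, h2⟩, ⟨h1, h3⟩⟩
  have hcard := Set.ncard_union_add_ncard_inter (J ∩ X) (J ∩ Y)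
    (hJfin.inter_of_left X) (hJfin.inter_of_left Y)
  rw [hu, hi] at hcard
  rw [r_eq_of_basis' hJ.isBasis', r_eq_of_basis' hI.isBasis']
  omega

lemma r_union_le [M.Finite] (hX : X ⊆ M.E) (hY : Y ⊆ M.E) :
    r M (X ∪ Y) ≤ r M X + r M Y := by
  have := r_submod hX hY
  have := r_nonneg M (X ∩ Y)
  omega

lemma r_ground_eq_ncard_base [M.Finite] (hB : M.IsBase B) : r M M.E = B.ncard :=
  r_eq_of_basis' hB.isBasis_ground.isBasis'

lemma dual_indep_iff_r [M.Finite] (hD : D ⊆ M.E) :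
    M✶.Indep D ↔ r M (M.E \ D) = r M M.E := by
  constructor
  · intro h
    obtain ⟨hDE, B, hB, hdisj⟩ := dual_indep_iff_exists'.1 h
    refine le_antisymm (r_mono diff_subset) ?_
    rw [r_ground_eq_ncard_base hB]
    exact ncard_le_r hB.indep (subset_diff.2 ⟨hB.subset_ground, hdisj.symm⟩)
  · intro h
    obtain ⟨I, hI⟩ := M.exists_isBasis (M.E \ D) diff_subset
    obtain ⟨B, hB, hIB⟩ := hI.indep.exists_isBase_superset
    have e1 : r M (M.E \ D) = I.ncard := r_eq_of_basis' hI.isBasis'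
    have e2 := r_ground_eq_ncard_base hB
    have hIB' : I = B := by
      apply Set.eq_of_subset_of_ncard_le hIB ?_ (M.set_finite B hB.subset_ground)
      omega
    rw [dual_indep_iff_exists']
    refine ⟨hD, B, hB, ?_⟩
    rw [← hIB']
    exact (Set.subset_diff.1 hI.subset).2.symm


end RankLemmas

/-- A partition `(P 0, …, P (m-1))` of the ground set in which all petals other
than `P 0` are triads with `r(P i ∪ P j) = r(P j) + 1` is a paddle: every
proper nonempty union of petals is exactly 3-separating, and the local
connectivity of any two petals is 2. -/
theorem stmt15 (M : Matroid α) [M.Finite] (hM : ThreeConnected M)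
    {m : ℕ} (hm : 2 ≤ m) (P : ℕ → Set α)
    (hdisj : ∀ i < m, ∀ j < m, i ≠ j → Disjoint (P i) (P j))
    (hunion : (⋃ i ∈ Set.Iio m, P i) = M.E)
    (hP0 : 2 ≤ (P 0).ncard)
    (htriad : ∀ i, 0 < i → i < m → Triad M (P i))
    (hrank : ∀ i, 0 < i → i < m → ∀ j < m, j ≠ i →
      r M (P i ∪ P j) = r M (P j) + 1) :
    (∀ J ⊆ Set.Iio m, J.Nonempty → J ≠ Set.Iio m →
      lam M (⋃ i ∈ J, P i) = 2) ∧
    (∀ i < m, ∀ j < m, i ≠ j → localConn M (P i) (P j) = 2) := by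
  have hfinE : M.E.Finite := M.ground_finite
  have hPE : ∀ i < m, P i ⊆ M.E := by
    intro i hi
    rw [← hunion]
    exact subset_biUnion_of_mem (show i ∈ Set.Iio m from hi)
  have hPfin : ∀ i < m, (P i).Finite := fun i hi => hfinE.subset (hPE i hi)
  -- the complement of a triad has rank r(E) - 1
  have hhyp : ∀ i, 0 < i → i < m → r M (M.E \ P i) = r M M.E - 1 := by
    intro i hi0 him
    obtain ⟨⟨hsub, hdep, hmin⟩, h3⟩ := htriad i hi0 him
    rw [dual_ground] at hsub
    have hlt : r M (M.E \ P i) ≠ r M M.E := fun h => hdep ((dual_indep_iff_r hsub).2 h)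
    have hle : r M (M.E \ P i) ≤ r M M.E := r_mono diff_subset
    obtain ⟨e, he⟩ : (P i).Nonempty := Set.nonempty_of_ncard_ne_zero (by omega)
    have hD : M✶.Indep (P i \ {e}) := hmin _ ⟨diff_subset, fun h => (h he).2 rfl⟩
    have hDsub : P i \ {e} ⊆ M.E := diff_subset.trans hsub
    have hsp : r M (M.E \ (P i \ {e})) = r M M.E := (dual_indep_iff_r hDsub).1 hD
    have hset : M.E \ (P i \ {e}) = (M.E \ P i) ∪ {e} := by
      rw [Set.diff_diff_right, Set.inter_eq_self_of_subset_right
        (Set.singleton_subset_iff.2 (hsub he))]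
    have h1 : r M ((M.E \ P i) ∪ {e}) ≤ r M (M.E \ P i) + r M {e} :=
      r_union_le diff_subset (Set.singleton_subset_iff.2 (hsub he))
    have h2 : r M {e} ≤ 1 := by
      have := r_le_ncard (M := M) (X := {e}) (Set.finite_singleton e)
      simpa using this
    rw [hset] at hsp
    omega
  -- each triad has rank 3
  have htrirank : ∀ i, 0 < i → i < m → r M (P i) = 3 := by
    intro i hi0 him
    have h3 := (htriad i hi0 him).2
    have hub : r M (P i) ≤ 3 := by
      have := r_le_ncard (M := M) (hPfin i him)
      omega
    have hlb0 : r M M.E ≤ r M (P i) + r M (M.E \ P i) := by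
      have := r_union_le (hPE i him) (diff_subset (s := M.E) (t := P i))
      rwa [Set.union_diff_cancel (hPE i him)] at this
    have hc := hhyp i hi0 him
    have hge1 : 1 ≤ r M (P i) := by omega
    by_contra hne
    have hlt3 : r M (P i) ≤ 2 := by omega
    set k : ℕ := (r M (P i)).toNat with hk
    have hkcast : (k : ℤ) = r M (P i) := Int.toNat_of_nonneg (r_nonneg M _)
    have hP0sub : P 0 ⊆ M.E \ P i := Set.subset_diff.2
      ⟨hPE 0 (by omega), hdisj 0 (by omega) i him (by omega)⟩
    have hcard2 : 2 ≤ ((M.E \ P i).ncard : ℤ) := by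
      have := Set.ncard_le_ncard hP0sub (hfinE.diff : (M.E \ P i).Finite)
      omega
    exact hM k (by omega) (by omega) (P i) (hPE i him)
      ⟨by unfold lam; omega, by rw [h3]; omega, by omega⟩
  -- key augmentation step
  have hstep : ∀ (A : Set α) i j, 0 < i → i < m → j < m → j ≠ i →
      P j ⊆ A → A ⊆ M.E \ P i → r M (A ∪ P i) = r M A + 1 := by
    intro A i j hi0 him hjm hji hPjA hA
    have hAE : A ⊆ M.E := hA.trans diff_subset
    -- upper bound
    have hsub1 := r_submod (M := M) hAE (union_subset (hPE i him) (hPE j hjm))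
    have e1 : A ∪ (P i ∪ P j) = A ∪ P i := by
      rw [union_comm (P i), ← union_assoc, union_eq_self_of_subset_right hPjA]
    have e2 : A ∩ (P i ∪ P j) = P j := by
      apply subset_antisymm
      · rintro x ⟨hxA, hx⟩
        rcases hx with hx | hx
        · exact absurd hx (hA hxA).2
        · exact hx
      · exact fun x hx => ⟨hPjA hx, Or.inr hx⟩
    rw [e1, e2, hrank i hi0 him j hjm hji] at hsub1
    -- lower bound
    have hsub2 := r_submod (M := M) (X := A ∪ P i) (Y := M.E \ P i)
      (union_subset hAE (hPE i him)) diff_subset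
    have e3 : (A ∪ P i) ∪ (M.E \ P i) = M.E := by
      apply subset_antisymm
      · exact union_subset (union_subset hAE (hPE i him)) diff_subset
      · intro x hx
        by_cases hxP : x ∈ P i
        · exact Or.inl (Or.inr hxP)
        · exact Or.inr ⟨hx, hxP⟩
    have e4 : (A ∪ P i) ∩ (M.E \ P i) = A := by
      rw [union_inter_distrib_right, inter_eq_left.2 hA,
        Set.inter_diff_self, union_empty]
    rw [e3, e4, hhyp i hi0 him] at hsub2
    omega
  -- rank of a union of petals
  have hIiofin : (Set.Iio m).Finite := Set.finite_Iio m
  have hrU : ∀ (n : ℕ) (J : Set ℕ), J.ncard = n → J ⊆ Set.Iio m → J.Nonempty →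
      (0 ∈ J → r M (⋃ i ∈ J, P i) = r M (P 0) + (J.ncard : ℤ) - 1) ∧
      (0 ∉ J → r M (⋃ i ∈ J, P i) = 2 + (J.ncard : ℤ)) := by
    intro n
    induction n with
    | zero =>
      intro J hc hJ hne
      exact absurd hc (by have := (Set.ncard_pos (hIiofin.subset hJ)).2 hne; omega)
    | succ n ih =>
      intro J hc hJsub hne
      have hJfin : J.Finite := hIiofin.subset hJsub
      rcases Nat.eq_zero_or_pos n with hn0 | hnpos
      · -- singleton case
        obtain ⟨a, rfl⟩ := Set.ncard_eq_one.1 (by omega : J.ncard = 1)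
        have ham : a < m := hJsub rfl
        have hbU : (⋃ i ∈ ({a} : Set ℕ), P i) = P a := by simp
        have hca : ({a} : Set ℕ).ncard = 1 := Set.ncard_singleton a
        constructor
        · rintro h0
          have : a = 0 := (Set.mem_singleton_iff.1 h0).symm
          subst this
          rw [hbU, hca]; omega
        · intro h0
          have ha : 0 < a := Nat.pos_of_ne_zero (fun h => h0 (by simp [h]))
          rw [hbU, hca, htrirank a ha ham]; omega
      · -- |J| ≥ 2 : pick i ∈ J with i ≠ 0
        have hc2 : 2 ≤ J.ncard := by omega
        obtain ⟨i, hiJ, hi0⟩ : ∃ i ∈ J, i ≠ 0 := by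
          by_cases h0 : 0 ∈ J
          · have : (J \ {0}).Nonempty := by
              apply Set.nonempty_of_ncard_ne_zero
              rw [Set.ncard_diff_singleton_of_mem h0]
              omega
            obtain ⟨i, hi⟩ := this
            exact ⟨i, hi.1, fun h => hi.2 (h ▸ rfl)⟩
          · obtain ⟨i, hi⟩ := hne
            exact ⟨i, hi, fun h => h0 (h ▸ hi)⟩
        set J' := J \ {i} with hJ'
        have hJ'fin : J'.Finite := hJfin.diff
        have hJ'c : J'.ncard = n := by
          rw [hJ', Set.ncard_diff_singleton_of_mem hiJ]; omega
        have hJ'ne : J'.Nonempty := Set.nonempty_of_ncard_ne_zero (by omega)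
        have hJ'sub : J' ⊆ Set.Iio m := (diff_subset).trans hJsub
        obtain ⟨j, hjJ'⟩ := hJ'ne
        have hji : j ≠ i := fun h => hjJ'.2 (h ▸ rfl)
        have hjm : j < m := hJ'sub hjJ'
        have him : i < m := hJsub hiJ
        set A := ⋃ k ∈ J', P k with hA
        have hPjA : P j ⊆ A := subset_biUnion_of_mem hjJ'
        have hAsub : A ⊆ M.E \ P i := by
          rw [Set.subset_diff]
          constructor
          · exact Set.iUnion₂_subset fun k hk => hPE k (hJ'sub hk)
          · rw [Set.disjoint_left]
            intro x hx hxPi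
            simp only [hA, Set.mem_iUnion] at hx
            obtain ⟨k, hkJ', hxk⟩ := hx
            exact Set.disjoint_left.1
              (hdisj k (hJ'sub hkJ') i him (fun h => hkJ'.2 (h ▸ rfl))) hxk hxPi
        have hJins : J = insert i J' := by
          rw [hJ', Set.insert_diff_singleton, Set.insert_eq_self.2 hiJ]
        have hbU : (⋃ k ∈ J, P k) = A ∪ P i := by
          rw [hJins, Set.biUnion_insert, union_comm]
        have hrec := hstep A i j (Nat.pos_of_ne_zero hi0) him hjm hji hPjA hAsub
        have hih := ih J' hJ'c hJ'sub ⟨j, hjJ'⟩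
        constructor
        · intro h0
          have h0' : 0 ∈ J' := ⟨h0, fun hh => hi0 ((Set.mem_singleton_iff.1 hh).symm ▸ rfl)⟩
          rw [hbU, hrec, hih.1 h0']
          omega
        · intro h0
          have h0' : 0 ∉ J' := fun h => h0 h.1
          rw [hbU, hrec, hih.2 h0']
          omega
  -- rank of the ground set
  have hIiocard : (Set.Iio m).ncard = m := by
    rw [← Finset.coe_Iio, Set.ncard_coe_finset, Nat.card_Iio]
  have hrE : r M M.E = r M (P 0) + (m : ℤ) - 1 := by
    have := (hrU (Set.Iio m).ncard (Set.Iio m) rfl subset_rfl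
      ⟨0, by simp; omega⟩).1 (by simp; omega)
    rw [hunion, hIiocard] at this
    exact this
  constructor
  · -- part 1 : lam of unions of petals
    intro J hJsub hJne hJne'
    set K := Set.Iio m \ J with hK
    have hKsub : K ⊆ Set.Iio m := diff_subset
    have hKne : K.Nonempty := by
      rw [Set.nonempty_iff_ne_empty]
      intro h
      exact hJne' (subset_antisymm hJsub (by
        intro x hx
        by_contra hxJ
        exact absurd (show x ∈ K from ⟨hx, hxJ⟩) (h ▸ notMem_empty x)))
    have hJfin : J.Finite := hIiofin.subset hJsub
    have hKfin : K.Finite := hIiofin.subset hKsub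
    have hcardJK : J.ncard + K.ncard = m := by
      rw [← Set.ncard_union_eq (Set.disjoint_sdiff_right) hJfin hKfin,
        Set.union_diff_cancel hJsub, hIiocard]
    have hcompl : M.E \ (⋃ i ∈ J, P i) = ⋃ i ∈ K, P i := by
      have hU : (⋃ i ∈ J, P i) ∪ (⋃ i ∈ K, P i) = M.E := by
        rw [← Set.biUnion_union, Set.union_diff_cancel hJsub, hunion]
      have hD : Disjoint (⋃ i ∈ J, P i) (⋃ i ∈ K, P i) := by
        rw [Set.disjoint_left]
        intro x hx hx'
        simp only [Set.mem_iUnion] at hx hx'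
        obtain ⟨a, haJ, hxa⟩ := hx
        obtain ⟨b, hbK, hxb⟩ := hx'
        exact Set.disjoint_left.1
          (hdisj a (hJsub haJ) b (hKsub hbK) (fun h => hbK.2 (h ▸ haJ))) hxa hxb
      rw [← hU, Set.union_diff_cancel_left (Set.disjoint_iff.1 hD)]
    have hJr := hrU J.ncard J rfl hJsub hJne
    have hKr := hrU K.ncard K rfl hKsub hKne
    unfold lam
    rw [hcompl]
    by_cases h0 : 0 ∈ J
    · rw [hJr.1 h0, hKr.2 (fun h => h.2 h0), hrE]; omega
    · rw [hJr.2 h0, hKr.1 ⟨by simp; omega, h0⟩, hrE]; omega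
  · -- part 2 : local connectivity of pairs of petals
    intro i him j hjm hij
    unfold localConn
    rcases Nat.eq_zero_or_pos i with rfl | hi0
    · have hj0 : 0 < j := by omega
      rw [union_comm, hrank j hj0 hjm 0 (by omega) (by omega), htrirank j hj0 hjm]
      omega
    · rcases Nat.eq_zero_or_pos j with rfl | hj0
      · rw [hrank i hi0 him 0 (by omega) (by omega), htrirank i hi0 him]
        omega
      · rw [hrank i hi0 him j hjm (by omega), htrirank i hi0 him, htrirank j hj0 hjm]
        omega

end DetPairs
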